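/- Roots of the truncated binomial series for √(1−z) lie outside the unit disk. For each integer m ≥ 1 let s_m(z) = Σ_{l=0}^{m} (−1)^l · binom(1/2, l) · z^l, where binom(1/2, l) is the generalized binomial coefficient. Then |1 − s_m(z)| < 1 for every z ∈ ℂ with |z| ≤ 1, and consequently every complex root w of s_m satisfies |w| > 1 (equivalently, writing s_m(z) = ∏_{a=1}^{m}(1 − λ_a^{(m)} z), each λ_a^{(m)} satisfies |λ_a^{(m)}| < 1). -/

import Mathlib

open scoped BigOperators
open Filter

/-- The generalized binomial coefficient `binom(1/2, l)`. -/
noncomputable def halfBinom (l : ℕ) : ℂ :=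
  (∏ i ∈ Finset.range l, ((1 : ℂ) / 2 - (i : ℂ))) / (Nat.factorial l : ℂ)

/-- `s_m(z) = Σ_{l=0}^m (−1)^l binom(1/2,l) z^l`, the `m`-th partial sum of the binomial
series for `√(1−z)`. -/
noncomputable def sFun (m : ℕ) (z : ℂ) : ℂ :=
  ∑ l ∈ Finset.range (m + 1), (-1 : ℂ) ^ l * halfBinom l * z ^ l

noncomputable def rSeq (l : ℕ) : ℝ :=
  (∏ i ∈ Finset.range l, ((1 : ℝ) / 2 - (i : ℝ))) / (Nat.factorial l : ℝ)

noncomputable def cSeq (l : ℕ) : ℝ := (-1) ^ (l + 1) * rSeq l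

lemma halfBinom_eq (l : ℕ) : halfBinom l = ((rSeq l : ℝ) : ℂ) := by
  unfold halfBinom rSeq
  push_cast
  ring

lemma cSeq_succ (l : ℕ) :
    cSeq (l + 1) = cSeq l * (((l : ℝ) - 1 / 2) / ((l : ℝ) + 1)) := by
  unfold cSeq rSeq
  rw [Finset.prod_range_succ, Nat.factorial_succ]
  have h1 : (Nat.factorial l : ℝ) ≠ 0 := by positivity
  have h2 : ((l : ℝ) + 1) ≠ 0 := by positivity
  push_cast
  field_simp
  ring

lemma cSeq_pos : ∀ l, 1 ≤ l → 0 < cSeq l := by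
  intro l hl
  induction l with
  | zero => omega
  | succ n ih =>
    rcases Nat.eq_or_lt_of_le hl with h | h
    · have : n = 0 := by omega
      subst this
      simp [cSeq, rSeq]
    · have hn : 1 ≤ n := by omega
      have := ih hn
      rw [cSeq_succ]
      apply mul_pos this
      apply div_pos
      · have : (1 : ℝ) ≤ (n : ℝ) := by exact_mod_cast hn
        linarith
      · positivity

lemma sum_cSeq : ∀ m : ℕ, ∑ i ∈ Finset.range m, cSeq (i + 1)
    = 1 - 2 * ((m : ℝ) + 1) * cSeq (m + 1) := by
  intro m
  induction m with
  | zero =>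
    simp [cSeq, rSeq]
  | succ n ih =>
    rw [Finset.sum_range_succ, ih, cSeq_succ (n + 1)]
    push_cast
    have h2 : ((n : ℝ) + 1 + 1) ≠ 0 := by positivity
    field_simp
    ring

lemma norm_halfBinom (l : ℕ) (hl : 1 ≤ l) : ‖halfBinom l‖ = cSeq l := by
  rw [halfBinom_eq, Complex.norm_real]
  have hc := cSeq_pos l hl
  have : |rSeq l| = |cSeq l| := by
    unfold cSeq
    rw [abs_mul, abs_pow, abs_neg, abs_one, one_pow, one_mul]
  rw [Real.norm_eq_abs, this, abs_of_pos hc]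

/-- The roots of the truncated binomial series for `√(1−z)` lie outside the closed unit
disk: `|1 − s_m(z)| < 1` on the closed unit disk, every root `w` of `s_m` has `|w| > 1`,
and equivalently, in any factorization `s_m(z) = ∏_a (1 − λ_a z)` each `|λ_a| < 1`. -/
theorem truncated_sqrt_roots_outside_unit_disk (m : ℕ) (hm : 1 ≤ m) :
    (∀ z : ℂ, ‖z‖ ≤ 1 → ‖1 - sFun m z‖ < 1) ∧
    (∀ w : ℂ, sFun m w = 0 → 1 < ‖w‖) ∧
    (∀ lam : Fin m → ℂ, (∀ z : ℂ, sFun m z = ∏ a, (1 - lam a * z)) →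
      ∀ a, ‖lam a‖ < 1) := by
  have key : ∀ z : ℂ, ‖z‖ ≤ 1 → ‖1 - sFun m z‖ < 1 := by
    intro z hz
    have hsplit : sFun m z
        = (∑ i ∈ Finset.range m, (-1 : ℂ) ^ (i + 1) * halfBinom (i + 1) * z ^ (i + 1)) + 1 := by
      unfold sFun
      rw [Finset.sum_range_succ']
      congr 1
      simp [halfBinom]
    have h1 : 1 - sFun m z
        = -∑ i ∈ Finset.range m, (-1 : ℂ) ^ (i + 1) * halfBinom (i + 1) * z ^ (i + 1) := by
      rw [hsplit]; ring
    rw [h1, norm_neg]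
    calc ‖∑ i ∈ Finset.range m, (-1 : ℂ) ^ (i + 1) * halfBinom (i + 1) * z ^ (i + 1)‖
        ≤ ∑ i ∈ Finset.range m, ‖(-1 : ℂ) ^ (i + 1) * halfBinom (i + 1) * z ^ (i + 1)‖ :=
          norm_sum_le _ _
      _ ≤ ∑ i ∈ Finset.range m, cSeq (i + 1) := by
          apply Finset.sum_le_sum
          intro i _
          rw [norm_mul, norm_mul, norm_pow, norm_neg, norm_one, one_pow, one_mul,
            norm_halfBinom (i + 1) (by omega), norm_pow]
          have hc := (cSeq_pos (i + 1) (by omega)).le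
          calc cSeq (i + 1) * ‖z‖ ^ (i + 1) ≤ cSeq (i + 1) * 1 := by
                apply mul_le_mul_of_nonneg_left _ hc
                exact pow_le_one₀ (norm_nonneg z) hz
            _ = cSeq (i + 1) := mul_one _
      _ = 1 - 2 * ((m : ℝ) + 1) * cSeq (m + 1) := sum_cSeq m
      _ < 1 := by
          have hc := cSeq_pos (m + 1) (by omega)
          have : 0 < 2 * ((m : ℝ) + 1) * cSeq (m + 1) := by positivity
          linarith
  have key2 : ∀ w : ℂ, sFun m w = 0 → 1 < ‖w‖ := by
    intro w hw
    by_contra h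
    push_neg at h
    have := key w h
    rw [hw, sub_zero, norm_one] at this
    exact lt_irrefl 1 this
  refine ⟨key, key2, ?_⟩
  intro lam hfac a
  by_cases h0 : lam a = 0
  · simp [h0]
  · have hroot : sFun m (lam a)⁻¹ = 0 := by
      rw [hfac]
      apply Finset.prod_eq_zero (Finset.mem_univ a)
      rw [mul_inv_cancel₀ h0, sub_self]
    have := key2 _ hroot
    rw [norm_inv, lt_inv_comm₀ one_pos (norm_pos_iff.mpr h0)] at this
    simpa using this
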